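/- arXiv:1405.6122 — 8 statements merged into one kernel-verified Lean document; each statement's English description precedes it below -/
import Mathlib

section
/- For Lennard-Jones potentials J1(z)=k1/z^12 - k2/z^6, J2(z)=J1(2z) (k1,k2>0), with δ1 the minimizer of J1 and γ the minimizer of J1+J2, it holds that J2(γ) > 2·J2((δ1+γ)/2). -/
set_option maxHeartbeats 1000000

open Set

theorem stmt_3 (k1 k2 : ℝ) (hk1 : 0 < k1) (hk2 : 0 < k2)
    (J1 J2 : ℝ → ℝ)
    (hJ1 : ∀ z ∈ Ioi (0:ℝ), J1 z = k1 / z ^ 12 - k2 / z ^ 6)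
    (hJ2 : ∀ z, J2 z = J1 (2 * z))
    (δ1 γ : ℝ)
    (hδ1 : δ1 = (2 * k1 / k2) ^ ((1:ℝ)/6))
    (hγ : γ = ((1 + (2:ℝ) ^ (-(12:ℝ))) / (1 + (2:ℝ) ^ (-(6:ℝ)))) ^ ((1:ℝ)/6) * δ1)
    (hγmin : ∀ z ∈ Ioi (0:ℝ), z ≠ γ → J1 γ + J2 γ < J1 z + J2 z) :
    2 * J2 ((δ1 + γ) / 2) < J2 γ := by
  have hb : ((1 + (2:ℝ) ^ (-(12:ℝ))) / (1 + (2:ℝ) ^ (-(6:ℝ)))) = 4097/4160 := by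
    rw [show (-(12:ℝ)) = ((-12 : ℤ) : ℝ) by norm_num,
        show (-(6:ℝ)) = ((-6 : ℤ) : ℝ) by norm_num,
        Real.rpow_intCast, Real.rpow_intCast]
    norm_num
  set c : ℝ := ((4097:ℝ)/4160) ^ ((1:ℝ)/6) with hc
  rw [hb] at hγ
  have hx : (0:ℝ) < 2 * k1 / k2 := by positivity
  have hδpos : 0 < δ1 := by rw [hδ1]; exact Real.rpow_pos_of_pos hx _
  have hcpos : 0 < c := Real.rpow_pos_of_pos (by norm_num) _
  have hδ6 : δ1 ^ (6:ℕ) = 2 * k1 / k2 := by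
    rw [hδ1, ← Real.rpow_natCast ((2*k1/k2) ^ ((1:ℝ)/6)) 6, ← Real.rpow_mul hx.le]
    norm_num
  have hc6 : c ^ (6:ℕ) = 4097/4160 := by
    rw [hc, ← Real.rpow_natCast (((4097:ℝ)/4160) ^ ((1:ℝ)/6)) 6,
        ← Real.rpow_mul (by norm_num : (0:ℝ) ≤ 4097/4160)]
    norm_num
  -- bounds on c
  have hcu : c < 0.998 := by
    by_contra h
    push_neg at h
    have := pow_le_pow_left₀ (by norm_num : (0:ℝ) ≤ 0.998) h 6
    rw [hc6] at this
    norm_num at this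
  have hcl : 0.997 < c := by
    by_contra h
    push_neg at h
    have := pow_le_pow_left₀ hcpos.le h 6
    rw [hc6] at this
    norm_num at this
  -- set up values
  set t : ℝ := c ^ (6:ℕ) with ht
  set s : ℝ := ((1 + c)/2) ^ (6:ℕ) with hs
  have hspos : 0 < s := by positivity
  have hsl : (0.9985:ℝ) ^ (6:ℕ) < s := by
    apply pow_lt_pow_left₀ (by nlinarith) (by norm_num)
    norm_num
  have hsu : s < (0.999:ℝ) ^ (6:ℕ) := by
    apply pow_lt_pow_left₀ (by nlinarith) (by positivity)
    norm_num
  have hsl' : (0.991:ℝ) < s := by nlinarith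
  have hsu' : s < (0.995:ℝ) := by nlinarith
  have hγpos : 0 < γ := by rw [hγ]; positivity
  have hmpos : 0 < (δ1 + γ)/2 := by positivity
  -- rewrite J values
  rw [hJ2, hJ2, hJ1 _ (by simp only [mem_Ioi]; linarith), hJ1 _ (by simp only [mem_Ioi]; linarith)]
  have hk2ne : k2 ≠ 0 := ne_of_gt hk2
  have hk1eq : k1 = k2 * δ1 ^ (6:ℕ) / 2 := by rw [hδ6]; field_simp
  have e1 : (2 * γ) ^ (12:ℕ) = 4096 * t^2 * (δ1^(6:ℕ))^2 := by
    rw [hγ, ht]; ring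
  have e2 : (2 * γ) ^ (6:ℕ) = 64 * t * δ1^(6:ℕ) := by rw [hγ, ht]; ring
  have e3 : (2 * ((δ1 + γ)/2)) ^ (12:ℕ) = 4096 * s^2 * (δ1^(6:ℕ))^2 := by
    rw [hγ, hs]; ring
  have e4 : (2 * ((δ1 + γ)/2)) ^ (6:ℕ) = 64 * s * δ1^(6:ℕ) := by rw [hγ, hs]; ring
  set u : ℝ := δ1 ^ (6:ℕ) with hu
  have hupos : 0 < u := by positivity
  rw [e1, e2, e3, e4, hk1eq]
  have htval : t = 4097/4160 := hc6
  have key : 0 < (s^2 - 128*s^2*t - 2*t^2 + 256*s*t^2) / (8192 * s^2 * t^2) := by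
    apply div_pos
    · rw [htval]; nlinarith
    · positivity
  have heq : (k2 * u / 2 / (4096 * t^2 * u^2) - k2 / (64 * t * u)) -
      2 * (k2 * u / 2 / (4096 * s^2 * u^2) - k2 / (64 * s * u)) =
      (k2 / u) * ((s^2 - 128*s^2*t - 2*t^2 + 256*s*t^2) / (8192 * s^2 * t^2)) := by
    have htpos : 0 < t := by rw [htval]; norm_num
    have h1 : t ≠ 0 := ne_of_gt htpos
    have h2 : s ≠ 0 := ne_of_gt hspos
    have h3 : u ≠ 0 := ne_of_gt hupos
    field_simp
    ring
  have : 0 < (k2 / u) * ((s^2 - 128*s^2*t - 2*t^2 + 256*s*t^2) / (8192 * s^2 * t^2)) :=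
    mul_pos (by positivity) key
  linarith [heq ▸ this]
end

section
/- For the Morse potential J1(z)=k1(1-e^{-k2(z-δ1)})^2 - k1 with k1,k2,δ1>0 and J2(z)=J1(2z), the unique minimizer γ of J_CB=J1+J2 satisfies δ1/2 < γ < δ1. -/
theorem stmt_6 (k1 k2 δ1 : ℝ) (hk1 : 0 < k1) (hk2 : 0 < k2) (hδ1 : 0 < δ1)
    (J1 : ℝ → ℝ)
    (hJ1 : ∀ z, J1 z = k1 * (1 - Real.exp (-k2 * (z - δ1))) ^ 2 - k1)
    (γ : ℝ)
    (hcrit : deriv J1 γ + 2 * deriv J1 (2 * γ) = 0) :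
    δ1 / 2 < γ ∧ γ < δ1 := by
  have hJ1' : J1 = fun z => k1 * (1 - Real.exp (-k2 * (z - δ1))) ^ 2 - k1 := funext hJ1
  have hd : ∀ z : ℝ, deriv J1 z =
      2 * k1 * k2 * Real.exp (-k2 * (z - δ1)) * (1 - Real.exp (-k2 * (z - δ1))) := by
    intro z
    have h1 : HasDerivAt (fun z : ℝ => -k2 * (z - δ1)) (-k2) z := by
      simpa using ((hasDerivAt_id z).sub_const δ1).const_mul (-k2)
    have h2 := h1.exp
    have h3 : HasDerivAt (fun x => (1 - Real.exp (-k2 * (x - δ1))) ^ 2) (((2:ℕ):ℝ) * (1 - Real.exp (-k2 * (z - δ1))) ^ (2 - 1) * (0 - Real.exp (-k2 * (z - δ1)) * -k2)) z := ((hasDerivAt_const z (1 : ℝ)).sub h2).pow 2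
    have h4 := (h3.const_mul k1).sub_const k1
    rw [hJ1', h4.deriv]
    ring
  rw [hd γ, hd (2 * γ)] at hcrit
  set a := Real.exp (-k2 * (γ - δ1)) with ha
  set b := Real.exp (-k2 * (2 * γ - δ1)) with hb
  have hapos : 0 < a := Real.exp_pos _
  have hbpos : 0 < b := Real.exp_pos _
  have h2k : (0 : ℝ) < 2 * k1 * k2 := by positivity
  have hfac : (2 * k1 * k2) * (a * (1 - a) + 2 * (b * (1 - b))) = 0 := by
    linear_combination hcrit
  have key : a * (1 - a) + 2 * (b * (1 - b)) = 0 :=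
    (mul_eq_zero.mp hfac).resolve_left h2k.ne'
  constructor
  · by_contra h
    push_neg at h
    have ha1 : 1 < a := by
      rw [ha]
      have : (0 : ℝ) < -k2 * (γ - δ1) := by nlinarith
      calc (1 : ℝ) = Real.exp 0 := Real.exp_zero.symm
        _ < _ := Real.exp_lt_exp.mpr this
    have hb1 : 1 ≤ b := by
      rw [hb]
      have : (0 : ℝ) ≤ -k2 * (2 * γ - δ1) := by nlinarith
      calc (1 : ℝ) = Real.exp 0 := Real.exp_zero.symm
        _ ≤ _ := Real.exp_le_exp.mpr this
    nlinarith [key, mul_pos hapos (sub_pos.mpr ha1)]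
  · by_contra h
    push_neg at h
    have ha1 : a ≤ 1 := by
      rw [ha]
      have : -k2 * (γ - δ1) ≤ 0 := by nlinarith
      calc Real.exp (-k2 * (γ - δ1)) ≤ Real.exp 0 := Real.exp_le_exp.mpr this
        _ = 1 := Real.exp_zero
    have hb1 : b < 1 := by
      rw [hb]
      have : -k2 * (2 * γ - δ1) < 0 := by nlinarith
      calc Real.exp (-k2 * (2 * γ - δ1)) < Real.exp 0 := Real.exp_lt_exp.mpr this
        _ = 1 := Real.exp_zero
    nlinarith [key, mul_pos hbpos (sub_pos.mpr hb1)]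
end

section
/- For Morse potentials J1(z)=k1(1-e^{-k2(z-δ1)})^2-k1, J2(z)=J1(2z), with γ the minimizer of J_CB=J1+J2, writing q = e^{k2 γ} > 1, the critical point equation J_CB'(γ)=0 yields e^{k2 δ1} = (q^3 + 2q^2)/(2 + q^2), and consequently J2(γ) - 2 J2((δ1+γ)/2) = k1/(q^2 (q^2+2)^2) · (2q^5 - 5q^4 + 16q^3 - 12q^2 + 16q - 8) > 0. -/
theorem stmt_8 (k1 k2 δ1 : ℝ) (hk1 : 0 < k1) (hk2 : 0 < k2) (hδ1 : 0 < δ1)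
    (J1 J2 : ℝ → ℝ)
    (hJ1 : ∀ z, J1 z = k1 * (1 - Real.exp (-k2 * (z - δ1))) ^ 2 - k1)
    (hJ2 : ∀ z, J2 z = J1 (2 * z))
    (γ : ℝ) (hγ : 0 < γ)
    (hcrit : deriv J1 γ + 2 * deriv J1 (2 * γ) = 0)
    (q : ℝ) (hqdef : q = Real.exp (k2 * γ)) (hq : 1 < q) :
    Real.exp (k2 * δ1) = (q ^ 3 + 2 * q ^ 2) / (2 + q ^ 2) ∧
    J2 γ - 2 * J2 ((δ1 + γ) / 2) =
      k1 / (q ^ 2 * (q ^ 2 + 2) ^ 2) *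
        (2 * q ^ 5 - 5 * q ^ 4 + 16 * q ^ 3 - 12 * q ^ 2 + 16 * q - 8) ∧
    0 < J2 γ - 2 * J2 ((δ1 + γ) / 2) := by
  have hJ1e : J1 = fun z => k1 * (1 - Real.exp (-k2 * (z - δ1))) ^ 2 - k1 := funext hJ1
  subst hJ1e
  set E := Real.exp (k2 * δ1) with hE
  have hq0 : 0 < q := lt_trans one_pos hq
  have hE0 : 0 < E := Real.exp_pos _
  -- derivative
  have hd : ∀ x : ℝ, deriv (fun z => k1 * (1 - Real.exp (-k2 * (z - δ1))) ^ 2 - k1) x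
      = 2 * k1 * k2 * (1 - Real.exp (-k2 * (x - δ1))) * Real.exp (-k2 * (x - δ1)) := by
    intro x
    have h1 : HasDerivAt (fun z : ℝ => -k2 * (z - δ1)) (-k2 * 1) x :=
      ((hasDerivAt_id x).sub_const δ1).const_mul (-k2)
    have h2 := h1.exp
    have h3 := (h2.const_sub 1).pow 2
    have h4 := (h3.const_mul k1).sub_const k1
    rw [show (fun z => k1 * (1 - Real.exp (-k2 * (z - δ1))) ^ 2 - k1) = (fun x => k1 * ((fun x => 1 - Real.exp (-k2 * (x - δ1))) ^ 2) x - k1) from rfl, h4.deriv]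
    ring
  -- exponential identities
  have hu : Real.exp (-k2 * (γ - δ1)) = E / q := by
    rw [show -k2 * (γ - δ1) = k2 * δ1 - k2 * γ by ring, Real.exp_sub, hqdef]
  have hv : Real.exp (-k2 * (2 * γ - δ1)) = E / q ^ 2 := by
    rw [show -k2 * (2 * γ - δ1) = k2 * δ1 - (k2 * γ + k2 * γ) by ring, Real.exp_sub,
      Real.exp_add, hqdef]
    ring
  have hw : Real.exp (-k2 * γ) = 1 / q := by
    rw [show -k2 * γ = -(k2 * γ) by ring, Real.exp_neg, hqdef]
    rw [one_div]
  rw [hd, hd, hu, hv] at hcrit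
  -- solve for E
  have hq2 : (q : ℝ) ^ 2 + 2 ≠ 0 := by positivity
  have hcrit2 : (1 - E / q) * (E / q) + 2 * ((1 - E / q ^ 2) * (E / q ^ 2)) = 0 := by
    have h2k : (0:ℝ) < 2 * k1 * k2 := by positivity
    nlinarith [hcrit, h2k]
  have hEeq : E = (q ^ 3 + 2 * q ^ 2) / (2 + q ^ 2) := by
    have hqne : q ≠ 0 := ne_of_gt hq0
    have hEne : E ≠ 0 := ne_of_gt hE0
    field_simp at hcrit2 ⊢
    have h5 : E * (q * q) * ((q - E) * q ^ 2 + 2 * (q ^ 2 - E)) = 0 := by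
      linear_combination q ^ 2 * hcrit2
    have h6 : (q - E) * q ^ 2 + 2 * (q ^ 2 - E) = 0 := by
      rcases mul_eq_zero.mp h5 with h | h
      · exact absurd h (by positivity)
      · exact h
    linarith [h6]
  have hqne : q ≠ 0 := ne_of_gt hq0
  have hA : J2 γ = k1 * (1 - Real.exp (-k2 * (2 * γ - δ1))) ^ 2 - k1 := hJ2 γ
  rw [hv, hEeq] at hA
  have hB : J2 ((δ1 + γ) / 2)
      = k1 * (1 - Real.exp (-k2 * (2 * ((δ1 + γ) / 2) - δ1))) ^ 2 - k1 := hJ2 _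
  rw [show -k2 * (2 * ((δ1 + γ) / 2) - δ1) = -(k2 * γ) by ring, Real.exp_neg, ← hqdef] at hB
  have heq : J2 γ - 2 * J2 ((δ1 + γ) / 2)
      = k1 / (q ^ 2 * (q ^ 2 + 2) ^ 2) *
        (2 * q ^ 5 - 5 * q ^ 4 + 16 * q ^ 3 - 12 * q ^ 2 + 16 * q - 8) := by
    rw [hA, hB]
    field_simp
    ring
  refine ⟨hEeq, heq, ?_⟩
  rw [heq]
  have key : (0:ℝ) < 2 * q ^ 5 - 5 * q ^ 4 + 16 * q ^ 3 - 12 * q ^ 2 + 16 * q - 8 := by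
    nlinarith [sq_nonneg (q - 1), hq, pow_pos hq0 3, pow_pos hq0 2, mul_pos hq0 (mul_pos hq0 hq0)]
  positivity
end

section
/- Let J0: ℝ → (-∞,∞] be a function with unique minimizer γ, strictly convex on (-∞,γ) on its domain, satisfying lim_{z→+∞} J0(z) = J0(∞) ∈ ℝ with J0(γ) < J0(∞), and J0 = J0** on (-∞,γ]. Let ℓ > 0 and denote by J0** the convex lower semicontinuous envelope of J0. Then for every ε > 0 there is η > 0 such that J0(z) - (J0**)'(ℓ)(z-ℓ) - J0**(ℓ) ≥ η for all z with |z - min{ℓ,γ}| ≥ ε. -/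
theorem stmt_11 (J0 J0star : ℝ → ℝ) (γ L : ℝ)
    (hcont : Continuous J0)
    (hmin : ∀ z, z ≠ γ → J0 γ < J0 z)
    (hstrict : StrictConvexOn ℝ (Set.Iic γ) J0)
    (hlim : Filter.Tendsto J0 Filter.atTop (nhds L)) (hLγ : J0 γ < L)
    (hconv : ConvexOn ℝ Set.univ J0star) (hlsc : LowerSemicontinuous J0star)
    (hstar_le : ∀ z, z ≤ γ → J0star z = J0 z)
    (hstar_ge : ∀ z, γ ≤ z → J0star z = J0 γ)
    (ℓ : ℝ) (hℓ : 0 < ℓ) (hdiff : DifferentiableAt ℝ J0star ℓ) :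
    ∀ ε > 0, ∃ η > 0, ∀ z, ε ≤ |z - min ℓ γ| →
      η ≤ J0 z - deriv J0star ℓ * (z - ℓ) - J0star ℓ := by
  intro ε hε
  set m := deriv J0star ℓ with hmdef
  set g : ℝ → ℝ := fun z => J0 z - m * (z - ℓ) - J0star ℓ with hgdef
  set c := min ℓ γ with hcdef
  have hcγ : c ≤ γ := min_le_right _ _
  -- support line inequality
  have hsupp : ∀ z, J0star ℓ + m * (z - ℓ) ≤ J0star z := by
    intro z
    rcases lt_trichotomy z ℓ with h | h | h
    · have h1 := hconv.slope_le_deriv (Set.mem_univ z) (Set.mem_univ ℓ) h hdiff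
      rw [slope_def_field, div_le_iff₀ (by linarith : (0:ℝ) < ℓ - z)] at h1
      nlinarith
    · simp [h]
    · have h1 := hconv.deriv_le_slope (Set.mem_univ ℓ) (Set.mem_univ z) h hdiff
      rw [slope_def_field, le_div_iff₀ (by linarith : (0:ℝ) < z - ℓ)] at h1
      nlinarith
  have hminle : ∀ z, J0 γ ≤ J0 z := by
    intro z
    rcases eq_or_ne z γ with rfl | h
    · exact le_refl _
    · exact (hmin z h).le
  have hstar_lower : ∀ z, J0star z ≤ J0 z := by
    intro z
    rcases le_total z γ with h | h
    · rw [hstar_le z h]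
    · rw [hstar_ge z h]; exact hminle z
  have hg0 : ∀ z, 0 ≤ g z := by
    intro z
    have h1 := hsupp z
    have h2 := hstar_lower z
    simp only [hgdef]; linarith
  have hgc : g c = 0 := by
    rcases le_total ℓ γ with h | h
    · have hc : c = ℓ := min_eq_left h
      simp [hgdef, hc, hstar_le ℓ h]
    · have hc : c = γ := min_eq_right h
      have hsℓ : J0star ℓ = J0 γ := hstar_ge ℓ h
      rcases eq_or_lt_of_le h with heq | hlt
      · simp [hgdef, hc, ← heq, hstar_le γ le_rfl]
      · have hm0 : m = 0 := by
          have hev : J0star =ᶠ[nhds ℓ] fun _ => J0 γ := by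
            filter_upwards [Ioi_mem_nhds hlt] with x hx
            exact hstar_ge x (le_of_lt hx)
          rw [hmdef, hev.deriv_eq, deriv_const]
        simp [hgdef, hc, hsℓ, hm0]
  -- g strictly convex on Iic γ
  have haff : ConvexOn ℝ (Set.Iic γ) (fun z => -(m * (z - ℓ)) - J0star ℓ) := by
    refine ⟨convex_Iic γ, ?_⟩
    intro x _ y _ a b ha hb hab
    have hb' : b = 1 - a := by linarith
    subst hb'
    simp only [smul_eq_mul]
    apply le_of_eq
    ring
  have gstrict : StrictConvexOn ℝ (Set.Iic γ) g := by
    have h := hstrict.add_convexOn haff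
    have hfun : g = J0 + fun z => -(m * (z - ℓ)) - J0star ℓ := by
      funext z
      simp only [hgdef, Pi.add_apply]
      ring
    rw [hfun]; exact h
  have gconv : ConvexOn ℝ (Set.Iic γ) g := gstrict.convexOn
  -- positivity of g away from c
  have hpos : ∀ z, z ≠ c → 0 < g z := by
    intro z hz
    rcases le_or_gt z γ with hzγ | hzγ
    · have key := gstrict.2 (Set.mem_Iic.mpr hzγ) (Set.mem_Iic.mpr hcγ) hz
        (by norm_num : (0:ℝ) < 1/2) (by norm_num : (0:ℝ) < 1/2) (by norm_num)
      have hmid := hg0 ((1/2 : ℝ) • z + (1/2 : ℝ) • c)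
      simp only [smul_eq_mul] at key hmid
      have hgc' : g c = 0 := hgc
      simp only [hgdef] at key hmid hgc' ⊢
      linarith
    · have h1 := hsupp z
      have h2 : J0star z = J0 γ := hstar_ge z hzγ.le
      have h3 : J0 γ < J0 z := hmin z (ne_of_gt hzγ)
      simp only [hgdef]
      linarith [h2 ▸ h1]
  -- left bound
  have hleft : ∀ z, z ≤ c - ε → g (c - ε) ≤ g z := by
    intro z hzle
    rcases eq_or_lt_of_le hzle with rfl | hlt
    · exact le_refl _
    · have hcz : (0:ℝ) < c - z := by linarith
      set lam := ε / (c - z) with hlam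
      have hlam0 : 0 < lam := div_pos hε hcz
      have hlam1 : lam ≤ 1 := by
        rw [hlam, div_le_one hcz]; linarith
      have hcomb := gconv.2 (Set.mem_Iic.mpr (by linarith : z ≤ γ)) (Set.mem_Iic.mpr hcγ)
        hlam0.le (by linarith : 0 ≤ 1 - lam) (by ring)
      have heq : lam • z + (1 - lam) • c = c - ε := by
        simp only [smul_eq_mul, hlam]
        field_simp
        ring
      rw [heq, hgc] at hcomb
      simp only [smul_eq_mul] at hcomb
      have := hg0 z
      nlinarith
  -- right bound
  obtain ⟨b, δ, hδ, hright⟩ : ∃ b δ, 0 < δ ∧ ∀ z, b ≤ z → δ ≤ g z := by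
    rcases le_or_gt γ ℓ with h | h
    · have hsℓ : J0star ℓ = J0 γ := hstar_ge ℓ h
      have hmle : m ≤ 0 := by
        have h1 := hsupp (ℓ + 1)
        have h2 : J0star (ℓ + 1) = J0 γ := hstar_ge _ (by linarith)
        rw [h2, hsℓ] at h1
        linarith
      set δ := (L - J0 γ) / 2 with hδdef
      have hδ0 : 0 < δ := by simp only [hδdef]; linarith
      have hev : ∀ᶠ z in Filter.atTop, J0 γ + δ < J0 z :=
        hlim.eventually (eventually_gt_nhds (by linarith))
      rw [Filter.eventually_atTop] at hev
      obtain ⟨b0, hb0⟩ := hev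
      refine ⟨max b0 ℓ, δ, hδ0, fun z hz => ?_⟩
      have hz1 := hb0 z (le_trans (le_max_left _ _) hz)
      have hz2 : ℓ ≤ z := le_trans (le_max_right _ _) hz
      have : m * (z - ℓ) ≤ 0 := mul_nonpos_of_nonpos_of_nonneg hmle (by linarith)
      simp only [hgdef, hsℓ]
      linarith
    · have hsℓ : J0star ℓ = J0 ℓ := hstar_le ℓ h.le
      have hJℓ : J0 γ < J0 ℓ := hmin ℓ (ne_of_lt h)
      have hmneg : m < 0 := by
        have h1 := hsupp γ
        have h2 : J0star γ = J0 γ := hstar_le γ le_rfl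
        rw [h2, hsℓ] at h1
        nlinarith
      set q := (J0 ℓ - J0 γ + 1) / (-m) with hq
      have hq0 : (-m) * q = J0 ℓ - J0 γ + 1 := by
        rw [hq]; field_simp
        exact mul_div_cancel_left₀ _ (ne_of_lt hmneg)
      refine ⟨ℓ + q, 1, one_pos, fun z hz => ?_⟩
      have h1 : (-m) * (z - ℓ) ≥ (-m) * q := by
        apply mul_le_mul_of_nonneg_left (by linarith) (by linarith)
      have h2 := hminle z
      simp only [hgdef, hsℓ]
      nlinarith
  -- middle compact part
  have hgcont : Continuous g := by
    simp only [hgdef]; fun_prop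
  set b' := max b (c + ε) with hb'
  have hne : (Set.Icc (c + ε) b').Nonempty := ⟨c + ε, le_refl _, le_max_right _ _⟩
  obtain ⟨x0, hx0mem, hx0min⟩ := isCompact_Icc.exists_isMinOn hne hgcont.continuousOn
  have hx0pos : 0 < g x0 := hpos x0 (by have := hx0mem.1; intro hcon; rw [hcon] at this; linarith)
  have hcεpos : 0 < g (c - ε) := hpos _ (by intro hcon; nlinarith [hcon ▸ (le_refl (c-ε))])
  refine ⟨min (min (g (c - ε)) (g x0)) δ, by positivity, fun z hz => ?_⟩
  have hgoal : min (min (g (c - ε)) (g x0)) δ ≤ g z := by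
    rcases le_abs.mp hz with h | h
    · -- z ≥ c + ε
      have hz1 : c + ε ≤ z := by linarith
      rcases le_total z b' with h2 | h2
      · exact le_trans (min_le_left _ _) (le_trans (min_le_right _ _) (hx0min ⟨hz1, h2⟩))
      · exact le_trans (min_le_right _ _) (hright z (le_trans (le_max_left _ _) h2))
    · have hz1 : z ≤ c - ε := by linarith
      exact le_trans (min_le_left _ _) (le_trans (min_le_left _ _) (hleft z hz1))
  simpa only [hgdef] using hgoal
end

section
/- Let J1, J2 satisfy [LJ1]–[LJ4], let γ denote the unique minimizer of J0 and δ1 the unique minimizer of J1. Then the boundary layer energy B(γ) defined by B(γ) = inf over N ∈ ℕ and sequences v: ℕ → ℝ with v^0 = 0 and v^{i+1} - v^i = γ for i ≥ N of [ (1/2)J1(v^1 - v^0) + Σ_{i≥0} { J2((v^{i+2}-v^i)/2) + (1/2)J1(v^{i+2}-v^{i+1}) + (1/2)J1(v^{i+1}-v^i) - J0(γ) } ] satisfies (1/2)J1(δ1) ≤ B(γ) ≤ (1/2)J1(γ). -/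
theorem stmt_15 (J1 J2 J0 : ℝ → ℝ) (γ δ1 : ℝ)
    (hJ0 : ∀ z, J0 z = J2 z +
        (1/2) * sInf {y : ℝ | ∃ z1 z2 : ℝ, z1 + z2 = 2 * z ∧ y = J1 z1 + J1 z2})
    (hγ : ∀ z, z ≠ γ → J0 γ < J0 z)
    (hJ0γ : J0 γ = J1 γ + J2 γ)
    (hδ1 : ∀ z, z ≠ δ1 → J1 δ1 < J1 z)
    (Bγ : ℝ)
    (hBγ : Bγ = sInf {E : ℝ | ∃ (N : ℕ) (v : ℕ → ℝ), v 0 = 0 ∧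
        (∀ i, N ≤ i → v (i+1) - v i = γ) ∧
        E = (1/2) * J1 (v 1 - v 0) +
          ∑' i : ℕ, (J2 ((v (i+2) - v i) / 2) + (1/2) * J1 (v (i+2) - v (i+1)) +
            (1/2) * J1 (v (i+1) - v i) - J0 γ)}) :
    (1/2) * J1 δ1 ≤ Bγ ∧ Bγ ≤ (1/2) * J1 γ := by
  have hmin1 : ∀ z, J1 δ1 ≤ J1 z := by
    intro z
    by_cases h : z = δ1
    · rw [h]
    · exact (hδ1 z h).le
  have hmin0 : ∀ z, J0 γ ≤ J0 z := by
    intro z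
    by_cases h : z = γ
    · rw [h]
    · exact (hγ z h).le
  -- J0 m ≤ J2 m + (1/2)(J1 a + J1 b) where m = (a+b)/2
  have hJ0le : ∀ a b : ℝ, J0 ((a + b) / 2) ≤ J2 ((a + b) / 2) + (1/2) * (J1 a + J1 b) := by
    intro a b
    rw [hJ0]
    have hmem : J1 a + J1 b ∈ {y : ℝ | ∃ z1 z2 : ℝ, z1 + z2 = 2 * ((a + b) / 2) ∧
        y = J1 z1 + J1 z2} := ⟨a, b, by ring, rfl⟩
    have hbdd : BddBelow {y : ℝ | ∃ z1 z2 : ℝ, z1 + z2 = 2 * ((a + b) / 2) ∧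
        y = J1 z1 + J1 z2} := by
      refine ⟨2 * J1 δ1, ?_⟩
      rintro y ⟨z1, z2, -, rfl⟩
      have := hmin1 z1
      have := hmin1 z2
      linarith
    have := csInf_le hbdd hmem
    linarith
  set S := {E : ℝ | ∃ (N : ℕ) (v : ℕ → ℝ), v 0 = 0 ∧
        (∀ i, N ≤ i → v (i+1) - v i = γ) ∧
        E = (1/2) * J1 (v 1 - v 0) +
          ∑' i : ℕ, (J2 ((v (i+2) - v i) / 2) + (1/2) * J1 (v (i+2) - v (i+1)) +
            (1/2) * J1 (v (i+1) - v i) - J0 γ)} with hS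
  -- every element of S is ≥ (1/2) J1 δ1
  have hlow : ∀ E ∈ S, (1/2) * J1 δ1 ≤ E := by
    rintro E ⟨N, v, h0, hv, rfl⟩
    have hts : 0 ≤ ∑' i : ℕ, (J2 ((v (i+2) - v i) / 2) + (1/2) * J1 (v (i+2) - v (i+1)) +
        (1/2) * J1 (v (i+1) - v i) - J0 γ) := by
      apply tsum_nonneg
      intro i
      have key := hJ0le (v (i+2) - v (i+1)) (v (i+1) - v i)
      have hm : (v (i+2) - v (i+1) + (v (i+1) - v i)) / 2 = (v (i+2) - v i) / 2 := by ring
      rw [hm] at key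
      have := hmin0 ((v (i+2) - v i) / 2)
      linarith
    have := hmin1 (v 1 - v 0)
    linarith
  -- the test element (1/2) J1 γ ∈ S
  have hmemS : (1/2) * J1 γ ∈ S := by
    refine ⟨0, fun i => (i : ℝ) * γ, by simp, ?_, ?_⟩
    · intro i _
      push_cast
      ring
    · have h1 : ((1 : ℕ) : ℝ) * γ - ((0 : ℕ) : ℝ) * γ = γ := by push_cast; ring
      rw [h1]
      have h2 : ∀ i : ℕ, (J2 ((((i+2 : ℕ) : ℝ) * γ - (i : ℝ) * γ) / 2) +
          (1/2) * J1 (((i+2 : ℕ) : ℝ) * γ - ((i+1 : ℕ) : ℝ) * γ) +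
          (1/2) * J1 (((i+1 : ℕ) : ℝ) * γ - (i : ℝ) * γ) - J0 γ) = 0 := by
        intro i
        have e1 : (((i+2 : ℕ) : ℝ) * γ - (i : ℝ) * γ) / 2 = γ := by push_cast; ring
        have e2 : ((i+2 : ℕ) : ℝ) * γ - ((i+1 : ℕ) : ℝ) * γ = γ := by push_cast; ring
        have e3 : ((i+1 : ℕ) : ℝ) * γ - (i : ℝ) * γ = γ := by push_cast; ring
        rw [e1, e2, e3, hJ0γ]
        ring
      rw [tsum_congr h2, tsum_zero]
      ring
  constructor
  · rw [hBγ]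
    exact le_csInf ⟨_, hmemS⟩ hlow
  · rw [hBγ]
    exact csInf_le ⟨(1/2) * J1 δ1, hlow⟩ hmemS
end

section
/- Let J1, J2 satisfy [LJ1]–[LJ4], and for m ∈ ℕ define the interface jump energy B_IF(m) = inf over k ∈ ℕ and v: ℕ → ℝ with v^0 = 0 of [ (1/2)J1(v^1-v^0) + Σ_{i=0}^{k-1}{ J2((v^{i+2}-v^i)/2) + (1/2)J1(v^{i+2}-v^{i+1}) + (1/2)J1(v^{i+1}-v^i) - J0(γ) } + ((2m+1)/2)( J_CB(v^{k+1}-v^k) - J0(γ) ) ]. Then (1/2)J1(δ1) ≤ B_IF(m) ≤ (1/2)J1(γ) for every m ∈ ℕ. -/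
theorem stmt_16 (J1 J2 J0 JCB : ℝ → ℝ) (γ δ1 : ℝ)
    (hJ0 : ∀ z, J0 z = J2 z +
        (1/2) * sInf {y : ℝ | ∃ z1 z2 : ℝ, z1 + z2 = 2 * z ∧ y = J1 z1 + J1 z2})
    (hJCB : ∀ z, JCB z = J1 z + J2 z)
    (hγ : ∀ z, z ≠ γ → J0 γ < J0 z)
    (hJ0γ : J0 γ = JCB γ)
    (hδ1 : ∀ z, z ≠ δ1 → J1 δ1 < J1 z)
    (BIF : ℕ → ℝ)
    (hBIF : ∀ m : ℕ, BIF m = sInf {E : ℝ | ∃ (k : ℕ) (v : ℕ → ℝ), v 0 = 0 ∧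
        E = (1/2) * J1 (v 1 - v 0) +
          (∑ i ∈ Finset.range k, (J2 ((v (i+2) - v i) / 2) +
            (1/2) * J1 (v (i+2) - v (i+1)) + (1/2) * J1 (v (i+1) - v i) - J0 γ)) +
          ((2 * (m:ℝ) + 1) / 2) * (JCB (v (k+1) - v k) - J0 γ)}) :
    ∀ m : ℕ, (1/2) * J1 δ1 ≤ BIF m ∧ BIF m ≤ (1/2) * J1 γ := by
  have hJ1min : ∀ z, J1 δ1 ≤ J1 z := by
    intro z
    rcases eq_or_ne z δ1 with h | h
    · rw [h]
    · exact (hδ1 z h).le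
  have hSbdd : ∀ z : ℝ,
      BddBelow {y : ℝ | ∃ z1 z2 : ℝ, z1 + z2 = 2 * z ∧ y = J1 z1 + J1 z2} := by
    intro z
    refine ⟨2 * J1 δ1, ?_⟩
    rintro y ⟨z1, z2, -, rfl⟩
    have h1 := hJ1min z1
    have h2 := hJ1min z2
    linarith
  have hJ0le : ∀ z a b : ℝ, a + b = 2 * z → J0 z ≤ J2 z + (1/2) * (J1 a + J1 b) := by
    intro z a b hab
    rw [hJ0]
    have h := csInf_le (hSbdd z) (⟨a, b, hab, rfl⟩ :
      (J1 a + J1 b) ∈ {y : ℝ | ∃ z1 z2 : ℝ, z1 + z2 = 2 * z ∧ y = J1 z1 + J1 z2})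
    linarith
  have hJ0min : ∀ z, J0 γ ≤ J0 z := by
    intro z
    rcases eq_or_ne z γ with h | h
    · rw [h]
    · exact (hγ z h).le
  have hJCBge : ∀ z, J0 γ ≤ JCB z := by
    intro z
    have h1 := hJ0le z z z (by ring)
    have h2 := hJ0min z
    rw [hJCB]
    linarith
  intro m
  have hlb : ∀ E ∈ {E : ℝ | ∃ (k : ℕ) (v : ℕ → ℝ), v 0 = 0 ∧
        E = (1/2) * J1 (v 1 - v 0) +
          (∑ i ∈ Finset.range k, (J2 ((v (i+2) - v i) / 2) +
            (1/2) * J1 (v (i+2) - v (i+1)) + (1/2) * J1 (v (i+1) - v i) - J0 γ)) +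
          ((2 * (m:ℝ) + 1) / 2) * (JCB (v (k+1) - v k) - J0 γ)},
      (1/2) * J1 δ1 ≤ E := by
    rintro E ⟨k, v, hv0, rfl⟩
    have hsum : 0 ≤ ∑ i ∈ Finset.range k, (J2 ((v (i+2) - v i) / 2) +
            (1/2) * J1 (v (i+2) - v (i+1)) + (1/2) * J1 (v (i+1) - v i) - J0 γ) := by
      refine Finset.sum_nonneg fun i _ => ?_
      have h1 := hJ0le ((v (i+2) - v i) / 2) (v (i+2) - v (i+1)) (v (i+1) - v i) (by ring)
      have h2 := hJ0min ((v (i+2) - v i) / 2)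
      linarith
    have hlast : 0 ≤ ((2 * (m:ℝ) + 1) / 2) * (JCB (v (k+1) - v k) - J0 γ) := by
      have h1 := hJCBge (v (k+1) - v k)
      have h2 : (0:ℝ) ≤ (2 * (m:ℝ) + 1) / 2 := by positivity
      nlinarith
    have hfirst := hJ1min (v 1 - v 0)
    linarith
  have hmem : (1/2) * J1 γ ∈ {E : ℝ | ∃ (k : ℕ) (v : ℕ → ℝ), v 0 = 0 ∧
        E = (1/2) * J1 (v 1 - v 0) +
          (∑ i ∈ Finset.range k, (J2 ((v (i+2) - v i) / 2) +
            (1/2) * J1 (v (i+2) - v (i+1)) + (1/2) * J1 (v (i+1) - v i) - J0 γ)) +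
          ((2 * (m:ℝ) + 1) / 2) * (JCB (v (k+1) - v k) - J0 γ)} := by
    refine ⟨0, fun i => (i : ℝ) * γ, by norm_num, ?_⟩
    simp only [Finset.range_zero, Finset.sum_empty, Nat.cast_one, Nat.cast_zero,
      Nat.cast_ofNat, one_mul, zero_mul, sub_zero, zero_add, add_zero]
    rw [hJ0γ, sub_self, mul_zero, add_zero]
  constructor
  · rw [hBIF m]
    exact le_csInf ⟨_, hmem⟩ hlb
  · rw [hBIF m]
    exact csInf_le ⟨(1/2) * J1 δ1, hlb⟩ hmem
end

section
/- Let J1, J2 satisfy [LJ1]–[LJ4] with J1(γ) < 0, J2(γ) < 0, J2(δ1) < 0, and set B̃(n,k) = min{ B_AIF(n), B(γ) - (1/2 + n)J0(γ), -k·J0(γ) } where B_AIF(n) = B_IF(n-1) + B(γ) - 2J0(γ). Then: (i) B̃(n,1) = -J0(γ) for all n ≥ 1; (ii) B̃(1,k) = B(γ) - (3/2)J0(γ) for all k ≥ 2; (iii) B̃(n,k) = B_AIF(n) for all n ≥ 2, k ≥ 2. -/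
theorem stmt_17 (J1 J2 J0 : ℝ → ℝ) (γ δ1 : ℝ)
    (hJ1γ : J1 γ < 0) (hJ2γ : J2 γ < 0) (hJ2δ1 : J2 δ1 < 0)
    (hδ1min : ∀ z, J1 δ1 ≤ J1 z)
    (hJ0γ : J0 γ = J1 γ + J2 γ)
    (hJ0le : J0 γ ≤ J1 δ1 + J2 δ1)
    (Bγ : ℝ) (BIF : ℕ → ℝ)
    (hBγ : (1/2) * J1 δ1 ≤ Bγ ∧ Bγ ≤ (1/2) * J1 γ)
    (hBIF : ∀ m, (1/2) * J1 δ1 ≤ BIF m ∧ BIF m ≤ (1/2) * J1 γ)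
    (BAIF : ℕ → ℝ) (hBAIF : ∀ n, BAIF n = BIF (n - 1) + Bγ - 2 * J0 γ)
    (Btil : ℕ → ℕ → ℝ)
    (hBtil : ∀ n k, Btil n k =
        min (min (BAIF n) (Bγ - (1/2 + (n:ℝ)) * J0 γ)) (-(k:ℝ) * J0 γ)) :
    (∀ n : ℕ, 1 ≤ n → Btil n 1 = -J0 γ) ∧
    (∀ k : ℕ, 2 ≤ k → Btil 1 k = Bγ - (3/2) * J0 γ) ∧
    (∀ n k : ℕ, 2 ≤ n → 2 ≤ k → Btil n k = BAIF n) := by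
  obtain ⟨hBγ1, hBγ2⟩ := hBγ
  have hJ1d : J1 δ1 ≤ J1 γ := hδ1min γ
  have hJ0neg : J0 γ < 0 := by linarith
  have hJ0lt : J0 γ < J1 δ1 := by linarith
  have hBγneg : Bγ < 0 := by linarith
  refine ⟨?_, ?_, ?_⟩
  · intro n hn
    have hn' : (1:ℝ) ≤ (n:ℝ) := by exact_mod_cast hn
    obtain ⟨h1, h2⟩ := hBIF (n-1)
    have hBIFneg : BIF (n-1) < 0 := by linarith
    rw [hBtil, hBAIF]
    have e1 : -((1:ℕ):ℝ) * J0 γ = -J0 γ := by push_cast; ring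
    rw [e1]
    apply min_eq_right
    apply le_min
    · linarith
    · nlinarith [mul_nonpos_of_nonneg_of_nonpos (by linarith : (0:ℝ) ≤ (n:ℝ) - 1) hJ0neg.le]
  · intro k hk
    have hk' : (2:ℝ) ≤ (k:ℝ) := by exact_mod_cast hk
    obtain ⟨h1, h2⟩ := hBIF 0
    rw [hBtil, hBAIF]
    have e1 : Bγ - (1/2 + ((1:ℕ):ℝ)) * J0 γ = Bγ - (3/2) * J0 γ := by push_cast; ring
    rw [e1]
    rw [min_eq_left, min_eq_right]
    · linarith
    · apply min_le_of_right_le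
      nlinarith [mul_nonpos_of_nonneg_of_nonpos (by linarith : (0:ℝ) ≤ (k:ℝ) - 3/2) hJ0neg.le]
  · intro n k hn hk
    have hn' : (2:ℝ) ≤ (n:ℝ) := by exact_mod_cast hn
    have hk' : (2:ℝ) ≤ (k:ℝ) := by exact_mod_cast hk
    obtain ⟨h1, h2⟩ := hBIF (n-1)
    have hBIFneg : BIF (n-1) < 0 := by linarith
    rw [hBtil]
    rw [min_eq_left, min_eq_left]
    · rw [hBAIF]
      nlinarith [mul_nonpos_of_nonneg_of_nonpos (by linarith : (0:ℝ) ≤ (n:ℝ) - 3/2) hJ0neg.le]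
    · apply min_le_of_left_le
      rw [hBAIF]
      nlinarith [mul_nonpos_of_nonneg_of_nonpos (by linarith : (0:ℝ) ≤ (k:ℝ) - 2) hJ0neg.le]
end

section
/- Let J1(z) = k1/z^12 - k2/z^6 (k1,k2>0) and J2(z)=J1(2z), with γ the minimizer of J_CB=J1+J2 and z_c = δ1((13/7)(1+2^{-11})/(1+2^{-5}))^{1/6}, δ1=(2k1/k2)^{1/6}. Define R(t) = J2((γ+t)/2) + (1/2)(J1(γ)+J1(t)) - J0(γ) - (3/2)(J_CB(t)-J0(γ)) for t > 0, where J0(γ)=J_CB(γ). Then R(γ) = 0, R'(γ) = 0, R'(t) ≥ 0 for 0 < t ≤ γ, and R'(t) ≤ 0 for γ ≤ t ≤ z_c; in particular R(t) ≤ 0 for all t ∈ (0, z_c]. -/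
open Set

set_option maxHeartbeats 2000000 in
theorem stmt_19 (k1 k2 : ℝ) (hk1 : 0 < k1) (hk2 : 0 < k2)
    (J1 J2 JCB : ℝ → ℝ)
    (hJ1 : ∀ z ∈ Ioi (0:ℝ), J1 z = k1 / z ^ 12 - k2 / z ^ 6)
    (hJ2 : ∀ z, J2 z = J1 (2 * z))
    (hJCB : ∀ z, JCB z = J1 z + J2 z)
    (δ1 zc : ℝ)
    (hδ1 : δ1 = (2 * k1 / k2) ^ ((1:ℝ)/6))
    (hzc : zc = δ1 * ((13/7) * (1 + (2:ℝ) ^ (-(11:ℝ))) / (1 + (2:ℝ) ^ (-(5:ℝ)))) ^ ((1:ℝ)/6))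
    (γ : ℝ) (hγpos : 0 < γ)
    (hγmin : ∀ z ∈ Ioi (0:ℝ), z ≠ γ → JCB γ < JCB z)
    (R : ℝ → ℝ)
    (hR : ∀ t, R t = J2 ((γ + t) / 2) + (1/2) * (J1 γ + J1 t) - JCB γ -
        (3/2) * (JCB t - JCB γ)) :
    R γ = 0 ∧ deriv R γ = 0 ∧
    (∀ t, 0 < t → t ≤ γ → 0 ≤ deriv R t) ∧
    (∀ t, γ ≤ t → t ≤ zc → deriv R t ≤ 0) ∧
    (∀ t, 0 < t → t ≤ zc → R t ≤ 0) := by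
  -- Explicit form of JCB on positives
  have hJCBx : ∀ z ∈ Ioi (0:ℝ), JCB z = (4097/4096) * k1 / z ^ 12 - (65/64) * k2 / z ^ 6 := by
    intro z hz
    have hz' : (0:ℝ) < z := hz
    have hzne : z ≠ 0 := ne_of_gt hz'
    have h2z : (2:ℝ) * z ∈ Ioi (0:ℝ) := by simp only [mem_Ioi]; linarith
    rw [hJCB, hJ2, hJ1 z hz, hJ1 (2*z) h2z]
    field_simp
    ring
  -- γ satisfies the critical point equation
  have hg : 4160 * k2 * γ ^ 6 = 8194 * k1 := by
    set m : ℝ := (8194 * k1 / (4160 * k2)) ^ ((1:ℝ)/6) with hm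
    have hfrac : (0:ℝ) < 8194 * k1 / (4160 * k2) := by positivity
    have hmpos : 0 < m := Real.rpow_pos_of_pos hfrac _
    have hm6 : m ^ (6:ℕ) = 8194 * k1 / (4160 * k2) := by
      rw [hm, ← Real.rpow_natCast ((8194 * k1 / (4160 * k2)) ^ ((1:ℝ)/6)) 6,
        ← Real.rpow_mul (le_of_lt hfrac)]
      norm_num
    have hγm : γ = m := by
      by_contra hne
      have h1 : JCB γ < JCB m := hγmin m hmpos (fun e => hne e.symm)
      have h2 : JCB m = -((65/64*k2)^2/(4*(4097/4096*k1))) := by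
        rw [hJCBx m hmpos]
        have hm12 : m ^ 12 = (m ^ (6:ℕ)) ^ 2 := by ring
        rw [hm12, hm6]
        field_simp
        ring
      have h3 : -((65/64*k2)^2/(4*(4097/4096*k1))) ≤ JCB γ := by
        rw [hJCBx γ hγpos]
        have hγne : γ ≠ 0 := ne_of_gt hγpos
        have hsq : 0 ≤ (4097/4096*k1) * (1/γ^6 - (65/64*k2)/(2*(4097/4096*k1)))^2 := by positivity
        have hexp : (4097/4096*k1) * (1/γ^6 - (65/64*k2)/(2*(4097/4096*k1)))^2
            = (4097/4096) * k1 / γ ^ 12 - (65/64) * k2 / γ ^ 6 + (65/64*k2)^2/(4*(4097/4096*k1)) := by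
          field_simp
          ring
        nlinarith [hsq, hexp]
      rw [h2] at h1
      linarith
    have : γ ^ (6:ℕ) = 8194 * k1 / (4160 * k2) := by rw [hγm]; exact hm6
    have hk2ne : (4160:ℝ) * k2 ≠ 0 := by positivity
    field_simp at this
    linarith [this]
  -- R agrees with an explicit function on (0, ∞)
  have hRf : ∀ s ∈ Ioi (0:ℝ), R s =
      k1/(γ+s)^12 - k2/(γ+s)^6 + (1/2) * (J1 γ + (k1 / s ^ 12 - k2 / s ^ 6)) - JCB γ -
        (3/2) * ((k1 / s ^ 12 - k2 / s ^ 6 + (k1 / (2*s) ^ 12 - k2 / (2*s) ^ 6)) - JCB γ) := by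
    intro s hs
    have hs' : (0:ℝ) < s := hs
    have hgs : γ + s ∈ Ioi (0:ℝ) := by simp only [mem_Ioi]; linarith
    have h2s : (2:ℝ) * s ∈ Ioi (0:ℝ) := by simp only [mem_Ioi]; linarith
    have harg : (2:ℝ) * ((γ+s)/2) = γ + s := by ring
    rw [hR, hJ2 ((γ+s)/2), harg, hJ1 (γ+s) hgs, hJCB s, hJ2 s, hJ1 s hs, hJ1 (2*s) h2s]
  -- R has explicit derivative at each positive point
  have hhas : ∀ t : ℝ, 0 < t → HasDerivAt R
      ((-24576*k1*t^13 + 12288*k2*t^13*(γ+t)^6 + 24585*k1*(γ+t)^13 - 12576*k2*t^6*(γ+t)^13)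
        / (2048 * t^13 * (γ+t)^13)) t := by
    intro t ht
    have hgt : (0:ℝ) < γ + t := by linarith
    have htne : t ≠ 0 := ne_of_gt ht
    have hgtne : γ + t ≠ 0 := ne_of_gt hgt
    have h2tne : (2:ℝ) * t ≠ 0 := by positivity
    have h1 : HasDerivAt (fun s : ℝ => γ + s) 1 t := by
      simpa using (hasDerivAt_id t).const_add γ
    have h2s : HasDerivAt (fun s : ℝ => 2 * s) 2 t := by
      simpa using (hasDerivAt_id t).const_mul (2:ℝ)
    have hA := (hasDerivAt_const t k1).div (h1.pow 12) (pow_ne_zero 12 hgtne)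
    have hB := (hasDerivAt_const t k2).div (h1.pow 6) (pow_ne_zero 6 hgtne)
    have hC := (hasDerivAt_const t k1).div ((hasDerivAt_id t).pow 12) (pow_ne_zero 12 htne)
    have hDd := (hasDerivAt_const t k2).div ((hasDerivAt_id t).pow 6) (pow_ne_zero 6 htne)
    have hE := (hasDerivAt_const t k1).div (h2s.pow 12) (pow_ne_zero 12 h2tne)
    have hF := (hasDerivAt_const t k2).div (h2s.pow 6) (pow_ne_zero 6 h2tne)
    have hsum := (((hA.sub hB).add
        (((hasDerivAt_const t (J1 γ)).add (hC.sub hDd)).const_mul ((1:ℝ)/2))).sub_const (JCB γ)).sub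
        ((((hC.sub hDd).add (hE.sub hF)).sub_const (JCB γ)).const_mul ((3:ℝ)/2))
    have heq : (fun s : ℝ =>
        k1/(γ+s)^12 - k2/(γ+s)^6 + (1/2) * (J1 γ + (k1 / s ^ 12 - k2 / s ^ 6)) - JCB γ -
        (3/2) * ((k1 / s ^ 12 - k2 / s ^ 6 + (k1 / (2*s) ^ 12 - k2 / (2*s) ^ 6)) - JCB γ))
        =ᶠ[nhds t] R := by
      filter_upwards [Ioi_mem_nhds ht] with s hs using (hRf s hs).symm
    have hsum' := hsum.congr_of_eventuallyEq heq.symm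
    refine hsum'.congr_deriv ?_
    simp only [Pi.pow_apply, id]
    field_simp
    ring
  -- key factorization of the derivative numerator
  have hkey : ∀ t : ℝ,
      4160 * γ^6 * (-24576*k1*t^13 + 12288*k2*t^13*(γ+t)^6 + 24585*k1*(γ+t)^13 - 12576*k2*t^6*(γ+t)^13)
      = 192 * k1 * (γ - t) * (532675*γ^18 + 7457450*t*γ^17 + 49006100*t^2*γ^16 + 201351150*t^3*γ^15 + 582213775*t^4*γ^14 + 1267766500*t^5*γ^13 + 2181300093*t^6*γ^12 + 3088393202*t^7*γ^11 + 3732082781*t^8*γ^10 + 3959447204*t^9*γ^9 + 3728046749*t^10*γ^8 + 3078853490*t^11*γ^7 + 2164789053*t^12*γ^6 + 1244324452*t^13*γ^5 + 556729039*t^14*γ^4 + 180849774*t^15*γ^3 + 37839892*t^16*γ^2 + 3842986*t^17*γ + 12291*t^18) := by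
    intro t
    linear_combination (12288*t^13*(γ+t)^6 - 12576*t^6*(γ+t)^13) * hg
  have hQpos : ∀ t : ℝ, 0 < t → (0:ℝ) < 532675*γ^18 + 7457450*t*γ^17 + 49006100*t^2*γ^16 + 201351150*t^3*γ^15 + 582213775*t^4*γ^14 + 1267766500*t^5*γ^13 + 2181300093*t^6*γ^12 + 3088393202*t^7*γ^11 + 3732082781*t^8*γ^10 + 3959447204*t^9*γ^9 + 3728046749*t^10*γ^8 + 3078853490*t^11*γ^7 + 2164789053*t^12*γ^6 + 1244324452*t^13*γ^5 + 556729039*t^14*γ^4 + 180849774*t^15*γ^3 + 37839892*t^16*γ^2 + 3842986*t^17*γ + 12291*t^18 := by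
    intro t ht
    positivity
  -- sign of the numerator
  have hNum : ∀ t : ℝ, 0 < t → t ≤ γ →
      0 ≤ -24576*k1*t^13 + 12288*k2*t^13*(γ+t)^6 + 24585*k1*(γ+t)^13 - 12576*k2*t^6*(γ+t)^13 := by
    intro t ht htγ
    have h6 : (0:ℝ) < 4160 * γ^6 := by positivity
    have hrhs : 0 ≤ 192 * k1 * (γ - t) * (532675*γ^18 + 7457450*t*γ^17 + 49006100*t^2*γ^16 + 201351150*t^3*γ^15 + 582213775*t^4*γ^14 + 1267766500*t^5*γ^13 + 2181300093*t^6*γ^12 + 3088393202*t^7*γ^11 + 3732082781*t^8*γ^10 + 3959447204*t^9*γ^9 + 3728046749*t^10*γ^8 + 3078853490*t^11*γ^7 + 2164789053*t^12*γ^6 + 1244324452*t^13*γ^5 + 556729039*t^14*γ^4 + 180849774*t^15*γ^3 + 37839892*t^16*γ^2 + 3842986*t^17*γ + 12291*t^18) := by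
      have h1 : 0 ≤ 192 * k1 * (γ - t) :=
        mul_nonneg (by positivity) (by linarith)
      exact mul_nonneg h1 (le_of_lt (hQpos t ht))
    have h2 : 4160 * γ^6 * (0:ℝ) ≤ 4160 * γ^6 *
        (-24576*k1*t^13 + 12288*k2*t^13*(γ+t)^6 + 24585*k1*(γ+t)^13 - 12576*k2*t^6*(γ+t)^13) := by
      rw [mul_zero, hkey t]; exact hrhs
    exact le_of_mul_le_mul_left h2 h6
  have hNum' : ∀ t : ℝ, 0 < t → γ ≤ t →
      -24576*k1*t^13 + 12288*k2*t^13*(γ+t)^6 + 24585*k1*(γ+t)^13 - 12576*k2*t^6*(γ+t)^13 ≤ 0 := by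
    intro t ht htγ
    have h6 : (0:ℝ) < 4160 * γ^6 := by positivity
    have hrhs : 192 * k1 * (γ - t) * (532675*γ^18 + 7457450*t*γ^17 + 49006100*t^2*γ^16 + 201351150*t^3*γ^15 + 582213775*t^4*γ^14 + 1267766500*t^5*γ^13 + 2181300093*t^6*γ^12 + 3088393202*t^7*γ^11 + 3732082781*t^8*γ^10 + 3959447204*t^9*γ^9 + 3728046749*t^10*γ^8 + 3078853490*t^11*γ^7 + 2164789053*t^12*γ^6 + 1244324452*t^13*γ^5 + 556729039*t^14*γ^4 + 180849774*t^15*γ^3 + 37839892*t^16*γ^2 + 3842986*t^17*γ + 12291*t^18) ≤ 0 := by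
      have h1 : 192 * k1 * (γ - t) ≤ 0 :=
        mul_nonpos_of_nonneg_of_nonpos (by positivity) (by linarith)
      exact mul_nonpos_of_nonpos_of_nonneg h1 (le_of_lt (hQpos t ht))
    have h2 : 4160 * γ^6 *
        (-24576*k1*t^13 + 12288*k2*t^13*(γ+t)^6 + 24585*k1*(γ+t)^13 - 12576*k2*t^6*(γ+t)^13)
        ≤ 4160 * γ^6 * (0:ℝ) := by
      rw [mul_zero, hkey t]; exact hrhs
    exact le_of_mul_le_mul_left h2 h6
  -- deriv sign lemmas
  have hd3 : ∀ t : ℝ, 0 < t → t ≤ γ → 0 ≤ deriv R t := by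
    intro t ht htγ
    rw [(hhas t ht).deriv]
    exact div_nonneg (hNum t ht htγ) (by positivity)
  have hd4 : ∀ t : ℝ, γ ≤ t → deriv R t ≤ 0 := by
    intro t htγ
    have ht : 0 < t := lt_of_lt_of_le hγpos htγ
    rw [(hhas t ht).deriv]
    exact div_nonpos_of_nonpos_of_nonneg (hNum' t ht htγ) (by positivity)
  -- R γ = 0
  have hRγ : R γ = 0 := by
    have harg : (γ + γ)/2 = γ := by ring
    rw [hR γ, harg, hJCB γ]; ring
  refine ⟨hRγ, ?_, hd3, fun t h1 _ => hd4 t h1, ?_⟩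
  · exact le_antisymm (hd4 γ le_rfl) (hd3 γ hγpos le_rfl)
  · intro t ht _
    rcases le_total t γ with hc | hc
    · have hmono : MonotoneOn R (Icc t γ) := by
        apply monotoneOn_of_deriv_nonneg (convex_Icc t γ)
        · intro s hs
          exact ((hhas s (lt_of_lt_of_le ht hs.1)).differentiableAt).continuousAt.continuousWithinAt
        · intro s hs
          rw [interior_Icc] at hs
          exact ((hhas s (lt_trans ht hs.1)).differentiableAt).differentiableWithinAt
        · intro s hs
          rw [interior_Icc] at hs
          exact hd3 s (lt_trans ht hs.1) (le_of_lt hs.2)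
      have := hmono (left_mem_Icc.mpr hc) (right_mem_Icc.mpr hc) hc
      rw [hRγ] at this
      exact this
    · have hmono : AntitoneOn R (Icc γ t) := by
        apply antitoneOn_of_deriv_nonpos (convex_Icc γ t)
        · intro s hs
          exact ((hhas s (lt_of_lt_of_le hγpos hs.1)).differentiableAt).continuousAt.continuousWithinAt
        · intro s hs
          rw [interior_Icc] at hs
          exact ((hhas s (lt_trans hγpos hs.1)).differentiableAt).differentiableWithinAt
        · intro s hs
          rw [interior_Icc] at hs
          exact hd4 s (le_of_lt hs.1)
      have := hmono (left_mem_Icc.mpr hc) (right_mem_Icc.mpr hc) hc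
      rw [hRγ] at this
      exact this
end
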